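/- Let φ, ψ : ℤ → ℂ satisfy h(n)·φ(n+2) + (1 + a(n+1)·h(n))·φ(n+1) + a(n)·φ(n) = λ·φ(n) and h(n)·ψ(n+2) + (1 + a(n+1)·h(n))·ψ(n+1) + a(n)·ψ(n) = b·ψ(n) for all n, with ψ(n+1) + a(n)·ψ(n) ≠ 0 and B(n) := b·ψ(n)/(ψ(n+1) + a(n)·ψ(n)) ≠ 0 for all n. Define φ̂(n) := B(n)·φ(n+1) + (a(n)·B(n) - b)·φ(n) and ĥ(n) := B(n)·h(n+1)/B(n+2). Then ĥ(n)·φ̂(n+2) + (1 + a(n+1)·ĥ(n))·φ̂(n+1) + a(n)·φ̂(n) = λ·φ̂(n) for all n. -/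

import Mathlib

set_option maxHeartbeats 4000000 in
/-- one-step Darboux transformation (Theorem 4 of the paper) for
the second-order difference equation `h·T²φ + (1+ã·h)·Tφ + a·φ = λ·φ`. -/
theorem darboux_one_step_case_II
    (h a : ℤ → ℂ) (b lam : ℂ) (φ ψ : ℤ → ℂ)
    (hφsol : ∀ n, h n * φ (n + 2) + (1 + a (n + 1) * h n) * φ (n + 1) + a n * φ n
              = lam * φ n)
    (hψsol : ∀ n, h n * ψ (n + 2) + (1 + a (n + 1) * h n) * ψ (n + 1) + a n * ψ n
              = b * ψ n)
    (hden : ∀ n, ψ (n + 1) + a n * ψ n ≠ 0)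
    (B : ℤ → ℂ)
    (hB : ∀ n, B n = b * ψ n / (ψ (n + 1) + a n * ψ n))
    (hBne : ∀ n, B n ≠ 0)
    (φh hh : ℤ → ℂ)
    (hφh : ∀ n, φh n = B n * φ (n + 1) + (a n * B n - b) * φ n)
    (hhh : ∀ n, hh n = B n * h (n + 1) / B (n + 2)) :
    ∀ n, hh n * φh (n + 2) + (1 + a (n + 1) * hh n) * φh (n + 1) + a n * φh n
      = lam * φh n := by
  intro n
  have d0 := hden n
  have d1 := hden (n + 1)
  have d2 := hden (n + 2)
  have hb2 := hBne (n + 2)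
  rw [hB] at hb2
  have hbp : b * ψ (n + 2) ≠ 0 := by
    intro hc
    exact hb2 (by rw [hc, zero_div])
  have hb : b ≠ 0 := fun hc => hbp (by rw [hc, zero_mul])
  have hp2 : ψ (n + 2) ≠ 0 := fun hc => hbp (by rw [hc, mul_zero])
  have eφ0 := hφsol n
  have eφ1 := hφsol (n + 1)
  have eψ0 := hψsol n
  have eψ1 := hψsol (n + 1)
  simp only [hφh, hhh, hB]
  simp only [show (n : ℤ) + 1 + 1 = n + 2 from by ring,
    show (n : ℤ) + 2 + 1 = n + 3 from by ring,
    show (n : ℤ) + 1 + 2 = n + 3 from by ring,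
    show (n : ℤ) + 2 + 2 = n + 4 from by ring] at *
  have d0' : ψ (n + 1) + ψ n * a n ≠ 0 := by rwa [mul_comm]
  have d1' : ψ (n + 2) + ψ (n + 1) * a (n + 1) ≠ 0 := by rwa [mul_comm]
  have d2' : ψ (n + 3) + ψ (n + 2) * a (n + 2) ≠ 0 := by rwa [mul_comm]
  field_simp
  linear_combination
    (-((ψ (n+2) + a (n+1) * ψ (n+1)) * ψ (n+2) * ψ (n+1))) * eφ0 +
    ((ψ n * ψ (n+2) * (ψ (n+2) + a (n+1) * ψ (n+1)))) * eφ1 +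
    ((ψ (n+2) *
        ((ψ (n+1) * φ (n+2) - ψ (n+2) * φ (n+1)) + (ψ (n+2) + a (n+1) * ψ (n+1)) * φ (n+1)))) * eψ0 +
    ((ψ n *
        (a (n+1) * (ψ (n+1) * φ (n+2) - ψ (n+2) * φ (n+1)) - (ψ (n+2) + a (n+1) * ψ (n+1)) * φ (n+2)))) * eψ1
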